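/- Let U be a finite set, Δ ≥ 1 an integer, C ≥ 0 a real number, and let (F_i)_{i∈ι} be a family of subsets of U indexed by a finite set ι with |F_i| ≤ Δ for every i ∈ ι. For an integer d ≥ 1 define the real number V(d) = |ι|/(Δ·d) − C·∑_{i=d+1}^{|ι|} U(i). Then for every integer D ≥ 1 one has ∑_{d=1}^{D} V(d) ≥ (|ι|/Δ)·H_D − C·Δ·|ι|, where H_D = ∑_{k=1}^{D} 1/k is the D-th harmonic number. -/

import Mathlib

open Finset

/-- For `V(d) = |ι|/(Δ·d) − C·∑_{i=d+1}^{|ι|} U(i)` one has, for every `D ≥ 1`,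
`∑_{d=1}^{D} V(d) ≥ (|ι|/Δ)·H_D − C·Δ·|ι|`, where `H_D` is the `D`-th harmonic
number and `U(i)` counts universe elements of degree exactly `i`. -/
theorem sum_V_ge_harmonic
    {U : Type*} [Fintype U] [DecidableEq U] {ι : Type*} [Fintype ι] [DecidableEq ι]
    (Δ : ℕ) (hΔ : 1 ≤ Δ) (C : ℝ) (hC : 0 ≤ C)
    (F : ι → Finset U) (hF : ∀ i, (F i).card ≤ Δ)
    (D : ℕ) (hD : 1 ≤ D) :
    (Fintype.card ι : ℝ) / Δ * (∑ k ∈ Finset.Icc 1 D, (1 : ℝ) / k)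
        - C * Δ * Fintype.card ι
      ≤ ∑ d ∈ Finset.Icc 1 D,
          ((Fintype.card ι : ℝ) / (Δ * d)
            - C * ∑ i ∈ Finset.Icc (d + 1) (Fintype.card ι),
                ((Finset.univ.filter fun u : U =>
                    (Finset.univ.filter fun j : ι => u ∈ F j).card = i).card : ℝ)) := by
  classical
  set n := Fintype.card ι with hn
  set deg : U → ℕ := fun u => (Finset.univ.filter fun j : ι => u ∈ F j).card with hdeg
  have hdegle : ∀ u, deg u ≤ n := by
    intro u
    simpa [hn, hdeg] using Finset.card_filter_le (Finset.univ : Finset ι)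
      (fun j => u ∈ F j)
  -- Step A: inner sum counts elements of degree > d
  have hA : ∀ d : ℕ, (∑ i ∈ Finset.Icc (d + 1) n,
      (Finset.univ.filter fun u : U => deg u = i).card)
      = (Finset.univ.filter fun u : U => d < deg u).card := by
    intro d
    rw [Finset.card_eq_sum_card_fiberwise (f := deg) (t := Finset.Icc (d + 1) n)
      (fun u hu => by
        simp only [Finset.mem_coe, mem_filter, mem_univ, true_and] at hu
        exact Finset.mem_Icc.2 ⟨hu, hdegle u⟩)]
    refine Finset.sum_congr rfl fun i hi => ?_
    rw [Finset.mem_Icc] at hi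
    congr 1
    ext u
    simp only [mem_filter, mem_univ, true_and]
    constructor
    · intro h; exact ⟨by omega, h⟩
    · intro h; exact h.2
  -- Step B and C: total sum bounded by Δ * n
  have hsumdeg : (∑ u : U, deg u) ≤ Δ * n := by
    have h1 : (∑ u : U, deg u) = ∑ j : ι, (F j).card := by
      simp only [hdeg, Finset.card_filter]
      rw [Finset.sum_comm]
      refine Finset.sum_congr rfl fun j _ => ?_
      rw [Finset.sum_ite_mem, Finset.univ_inter, Finset.card_eq_sum_ones]
    rw [h1]
    calc ∑ j : ι, (F j).card ≤ ∑ _j : ι, Δ := Finset.sum_le_sum fun j _ => hF j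
      _ = Δ * n := by simp [hn, mul_comm]
  have key : (∑ d ∈ Finset.Icc 1 D, ∑ i ∈ Finset.Icc (d + 1) n,
      (Finset.univ.filter fun u : U => deg u = i).card) ≤ Δ * n := by
    calc (∑ d ∈ Finset.Icc 1 D, ∑ i ∈ Finset.Icc (d + 1) n,
        (Finset.univ.filter fun u : U => deg u = i).card)
        = ∑ d ∈ Finset.Icc 1 D, (Finset.univ.filter fun u : U => d < deg u).card := by
          exact Finset.sum_congr rfl fun d _ => hA d
      _ = ∑ d ∈ Finset.Icc 1 D, ∑ u : U, (if d < deg u then 1 else 0) := by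
          exact Finset.sum_congr rfl fun d _ => Finset.card_filter _ _
      _ = ∑ u : U, ∑ d ∈ Finset.Icc 1 D, (if d < deg u then 1 else 0) :=
          Finset.sum_comm
      _ ≤ ∑ u : U, deg u := by
          refine Finset.sum_le_sum fun u _ => ?_
          rw [← Finset.card_filter]
          calc ((Finset.Icc 1 D).filter fun d => d < deg u).card
              ≤ (Finset.Icc 1 (deg u)).card := by
                apply Finset.card_le_card
                intro d hd
                simp only [Finset.mem_filter, Finset.mem_Icc] at hd ⊢
                omega
            _ ≤ deg u := by simp [Nat.card_Icc]
      _ ≤ Δ * n := hsumdeg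
  -- Put everything together over the reals
  have hsumsplit : ∑ d ∈ Finset.Icc 1 D,
      ((n : ℝ) / (Δ * d) - C * ∑ i ∈ Finset.Icc (d + 1) n,
        ((Finset.univ.filter fun u : U => deg u = i).card : ℝ))
      = (∑ d ∈ Finset.Icc 1 D, (n : ℝ) / (Δ * d))
        - C * ∑ d ∈ Finset.Icc 1 D, ∑ i ∈ Finset.Icc (d + 1) n,
          ((Finset.univ.filter fun u : U => deg u = i).card : ℝ) := by
    rw [Finset.sum_sub_distrib, Finset.mul_sum]
  have hharm : (∑ d ∈ Finset.Icc 1 D, (n : ℝ) / (Δ * d))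
      = (n : ℝ) / Δ * ∑ k ∈ Finset.Icc 1 D, (1 : ℝ) / k := by
    rw [Finset.mul_sum]
    refine Finset.sum_congr rfl fun d _ => ?_
    field_simp
  have hcast : (∑ d ∈ Finset.Icc 1 D, ∑ i ∈ Finset.Icc (d + 1) n,
      ((Finset.univ.filter fun u : U => deg u = i).card : ℝ)) ≤ (Δ : ℝ) * n := by
    have := key
    push_cast
    exact_mod_cast this
  rw [hsumsplit, hharm]
  have : C * ∑ d ∈ Finset.Icc 1 D, ∑ i ∈ Finset.Icc (d + 1) n,
      ((Finset.univ.filter fun u : U => deg u = i).card : ℝ) ≤ C * Δ * n := by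
    rw [mul_assoc]
    exact mul_le_mul_of_nonneg_left hcast hC
  linarith
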